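/- Let N ≥ 0 and 0 ≤ j < i ≤ N be integers, and let p be a real polynomial of degree at most i such that ∫_{−1}^{1} ((1−c)/2)^{2N+3−2i} · p(c) · r(c) dc = 0 for every real polynomial r of degree strictly less than i. Then for every real polynomial q of degree at most j, ∫_{−1}^{1} ((1−c)/2)^{2+(N−i)+(N−j)} · p(c) · q(c) dc = 0. -/

import Mathlib

/-- Let `N ≥ 0` and `0 ≤ j < i ≤ N` be integers, and let `p` be a real polynomial of
degree at most `i` such that `∫_{−1}^{1} ((1−c)/2)^{2N+3−2i} · p(c) · r(c) dc = 0` for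
every real polynomial `r` of degree strictly less than `i`.  Then for every real
polynomial `q` of degree at most `j`,
`∫_{−1}^{1} ((1−c)/2)^{2+(N−i)+(N−j)} · p(c) · q(c) dc = 0`. -/
theorem weighted_orthogonality_transfer (N i j : ℕ) (hji : j < i) (hiN : i ≤ N)
    (p : Polynomial ℝ) (hp : p.degree ≤ (i : ℕ))
    (horth : ∀ r : Polynomial ℝ, r.degree < (i : ℕ) →
      ∫ c in (-1 : ℝ)..1, ((1 - c) / 2) ^ (2 * N + 3 - 2 * i) * p.eval c * r.eval c = 0) :
    ∀ q : Polynomial ℝ, q.degree ≤ (j : ℕ) →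
      ∫ c in (-1 : ℝ)..1,
        ((1 - c) / 2) ^ (2 + (N - i) + (N - j)) * p.eval c * q.eval c = 0 := by
  intro q hq
  set r : Polynomial ℝ := (Polynomial.C (1/2 : ℝ) * (1 - Polynomial.X)) ^ (i - j - 1) * q
    with hr
  have h1 : (Polynomial.C (1/2 : ℝ) * (1 - Polynomial.X)).degree ≤ 1 := by
    calc (Polynomial.C (1/2 : ℝ) * (1 - Polynomial.X)).degree
        ≤ (Polynomial.C (1/2 : ℝ)).degree + (1 - Polynomial.X : Polynomial ℝ).degree :=
          Polynomial.degree_mul_le _ _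
      _ ≤ 0 + 1 := add_le_add Polynomial.degree_C_le (by
          refine le_trans (Polynomial.degree_sub_le _ _) ?_
          simp)
      _ = 1 := by norm_num
  have hdeg : r.degree < (i : ℕ) := by
    have h2 : r.degree ≤ ((i - j - 1 : ℕ) : WithBot ℕ) + (j : ℕ) := by
      calc r.degree ≤ ((Polynomial.C (1/2 : ℝ) * (1 - Polynomial.X)) ^ (i - j - 1)).degree
            + q.degree := Polynomial.degree_mul_le _ _
        _ ≤ (i - j - 1) • (Polynomial.C (1/2 : ℝ) * (1 - Polynomial.X)).degree + (j : ℕ) :=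
            add_le_add (Polynomial.degree_pow_le _ _) hq
        _ ≤ (i - j - 1) • (1 : WithBot ℕ) + (j : ℕ) := by
            exact add_le_add (nsmul_le_nsmul_right h1 _) le_rfl
        _ = ((i - j - 1 : ℕ) : WithBot ℕ) + (j : ℕ) := by
            simp [nsmul_eq_mul]
    refine lt_of_le_of_lt h2 ?_
    have : ((i - j - 1 : ℕ) : WithBot ℕ) + (j : ℕ) = ((i - j - 1 + j : ℕ) : WithBot ℕ) := by
      push_cast; ring
    rw [this]
    exact_mod_cast Nat.lt_of_le_of_lt (le_refl _) (by omega)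
  have hexp : 2 + (N - i) + (N - j) = (2 * N + 3 - 2 * i) + (i - j - 1) := by omega
  calc ∫ c in (-1 : ℝ)..1,
        ((1 - c) / 2) ^ (2 + (N - i) + (N - j)) * p.eval c * q.eval c
      = ∫ c in (-1 : ℝ)..1,
        ((1 - c) / 2) ^ (2 * N + 3 - 2 * i) * p.eval c * r.eval c := by
        apply intervalIntegral.integral_congr
        intro c _
        simp only [hr, Polynomial.eval_mul, Polynomial.eval_pow, Polynomial.eval_C,
          Polynomial.eval_sub, Polynomial.eval_one, Polynomial.eval_X, hexp, pow_add]
        ring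
    _ = 0 := horth r hdeg
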